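/- arXiv:0904.1757 — 10 statements merged into one kernel-verified Lean document; each statement's English description precedes it below -/
import Mathlib

section
/- For every positive integer n, (1/n) * Σ_{k=0}^{n-1} 1/C(n-1,k) = (1/2^n) * Σ_{k=1}^{n} 2^k/k, where C(m,j) denotes the binomial coefficient. -/
open Finset

lemma sym_sum (m : ℕ) :
    ∑ j ∈ range (m + 1), ((j : ℝ) + 1) / m.choose j
      = ((m : ℝ) + 2) / 2 * ∑ j ∈ range (m + 1), (1 : ℝ) / m.choose j := by
  have h2 : ∑ j ∈ range (m + 1), ((j : ℝ) + 1) / m.choose j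
      = ∑ j ∈ range (m + 1), ((m : ℝ) + 1 - j) / m.choose j := by
    rw [← Finset.sum_range_reflect]
    apply Finset.sum_congr rfl
    intro j hj
    rw [mem_range] at hj
    have hj' : j ≤ m := by omega
    have hsymm : m.choose (m + 1 - 1 - j) = m.choose j := by
      simpa using Nat.choose_symm hj'
    rw [hsymm, Nat.cast_sub (by omega : j ≤ m + 1 - 1)]
    push_cast
    ring_nf
  have h3 : (2 : ℝ) * ∑ j ∈ range (m + 1), ((j : ℝ) + 1) / m.choose j
      = ((m : ℝ) + 2) * ∑ j ∈ range (m + 1), (1 : ℝ) / m.choose j := by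
    rw [two_mul]
    nth_rewrite 2 [h2]
    rw [Finset.mul_sum, ← Finset.sum_add_distrib]
    apply Finset.sum_congr rfl
    intro j hj
    rw [← add_div, mul_one_div]
    congr 1
    ring
  linarith

lemma key (m : ℕ) :
    ∑ k ∈ range (m + 2), (1 : ℝ) / (m + 1).choose k
      = ((m : ℝ) + 2) / (2 * ((m : ℝ) + 1)) * ∑ k ∈ range (m + 1), (1 : ℝ) / m.choose k + 1 := by
  rw [Finset.sum_range_succ']
  have hterm : ∀ j ∈ range (m + 1), (1 : ℝ) / (m + 1).choose (j + 1)
      = (1 / ((m : ℝ) + 1)) * (((j : ℝ) + 1) / m.choose j) := by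
    intro j hj
    rw [mem_range] at hj
    have hid : (m + 1) * m.choose j = (m + 1).choose (j + 1) * (j + 1) :=
      Nat.add_one_mul_choose_eq m j
    have hc : (0 : ℝ) < m.choose j := by
      exact_mod_cast Nat.choose_pos (by omega : j ≤ m)
    have hc2 : (0 : ℝ) < (m + 1).choose (j + 1) := by
      exact_mod_cast Nat.choose_pos (by omega : j + 1 ≤ m + 1)
    have hidR : ((m : ℝ) + 1) * m.choose j = ((m + 1).choose (j + 1) : ℝ) * ((j : ℝ) + 1) := by
      exact_mod_cast hid
    field_simp
    linarith [hidR]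
  rw [Finset.sum_congr rfl hterm, ← Finset.mul_sum, sym_sum]
  have h1 : ((m : ℝ) + 1) ≠ 0 := by positivity
  have hch : ((m + 1).choose 0 : ℝ) = 1 := by norm_num
  rw [hch]
  field_simp

lemma main_id (m : ℕ) :
    ∑ k ∈ range (m + 1), (1 : ℝ) / m.choose k
      = ((m : ℝ) + 1) / 2 ^ (m + 1) * ∑ k ∈ Icc 1 (m + 1), (2 : ℝ) ^ k / k := by
  induction m with
  | zero => norm_num
  | succ m ih =>
    rw [key, ih]
    have hIcc : ∑ k ∈ Icc 1 (m + 2), (2 : ℝ) ^ k / k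
        = ∑ k ∈ Icc 1 (m + 1), (2 : ℝ) ^ k / k + 2 ^ (m + 2) / (m + 2) := by
      have := Finset.sum_Icc_succ_top (a := 1) (b := m + 1)
        (f := fun k => (2 : ℝ) ^ k / k) (by omega)
      rw [show m + 2 = m + 1 + 1 from rfl, this]
      push_cast
      ring
    rw [hIcc]
    have h1 : ((m : ℝ) + 1) ≠ 0 := by positivity
    have h2 : ((m : ℝ) + 2) ≠ 0 := by positivity
    have h3 : (2 : ℝ) ^ (m + 1) ≠ 0 := by positivity
    push_cast
    field_simp
    ring

theorem stmt_0 (n : ℕ) (hn : 0 < n) :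
    (1 / n : ℝ) * ∑ k ∈ Finset.range n, (1 : ℝ) / (n - 1).choose k =
      (1 / 2 ^ n : ℝ) * ∑ k ∈ Finset.Icc 1 n, (2 : ℝ) ^ k / k := by
  obtain ⟨m, rfl⟩ : ∃ m, n = m + 1 := ⟨n - 1, by omega⟩
  simp only [Nat.add_sub_cancel]
  rw [main_id]
  have h1 : ((m : ℝ) + 1) ≠ 0 := by positivity
  have h3 : (2 : ℝ) ^ (m + 1) ≠ 0 := by positivity
  push_cast
  field_simp
end

section
/- For every natural number n, Σ_{k=0}^{n} 1/C(n,k) = ((n+1)/2^n) * Σ_{k=0}^{n} 2^k/(k+1). -/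
lemma pair_aux (n k : ℕ) (h : k ≤ n) :
    (1 : ℝ) / ((n + 1).choose k) + 1 / ((n + 1).choose (k + 1)) =
      (n + 2) / (n + 1) * (1 / (n.choose k)) := by
  have ha : (0 : ℝ) < (n.choose k : ℝ) := by
    exact_mod_cast Nat.choose_pos h
  have hb : (0 : ℝ) < ((n + 1).choose k : ℝ) := by
    exact_mod_cast Nat.choose_pos (h.trans (Nat.le_succ n))
  have hc : (0 : ℝ) < ((n + 1).choose (k + 1) : ℝ) := by
    exact_mod_cast Nat.choose_pos (Nat.succ_le_succ h)
  have e1 : ((n + 1).choose k : ℝ) * ((n : ℝ) + 1 - k) = (n.choose k : ℝ) * (n + 1) := by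
    have := Nat.choose_mul_succ_eq n k
    have h2 : (n + 1 - k : ℕ) = n - k + 1 := by omega
    have h3 : ((n - k : ℕ) : ℝ) = (n : ℝ) - k := by
      push_cast [Nat.cast_sub h]; ring
    calc ((n + 1).choose k : ℝ) * ((n : ℝ) + 1 - k)
        = ((n + 1).choose k : ℝ) * (((n - k : ℕ) : ℝ) + 1) := by rw [h3]; ring
      _ = (((n + 1).choose k * (n + 1 - k) : ℕ) : ℝ) := by push_cast [h2]; ring
      _ = ((n.choose k * (n + 1) : ℕ) : ℝ) := by rw [← this]
      _ = (n.choose k : ℝ) * (n + 1) := by push_cast; ring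
  have e2 : ((n + 1).choose (k + 1) : ℝ) * ((k : ℝ) + 1) = (n + 1) * (n.choose k : ℝ) := by
    have := Nat.add_one_mul_choose_eq n k
    calc ((n + 1).choose (k + 1) : ℝ) * ((k : ℝ) + 1)
        = (((n + 1).choose (k + 1) * (k + 1) : ℕ) : ℝ) := by push_cast; ring
      _ = (((n + 1) * n.choose k : ℕ) : ℝ) := by rw [← this]
      _ = (n + 1) * (n.choose k : ℝ) := by push_cast; ring
  have hn1 : ((n : ℝ) + 1) ≠ 0 := by positivity
  field_simp
  nlinarith [e1, e2, mul_pos hb hc, mul_pos ha hb, mul_pos ha hc]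

theorem stmt_1 (n : ℕ) :
    ∑ k ∈ Finset.range (n + 1), (1 : ℝ) / n.choose k =
      ((n + 1 : ℝ) / 2 ^ n) * ∑ k ∈ Finset.range (n + 1), (2 : ℝ) ^ k / (k + 1) := by
  induction n with
  | zero => simp
  | succ n ih =>
    set Sn := ∑ k ∈ Finset.range (n + 1), (1 : ℝ) / n.choose k with hSn
    set Tn := ∑ k ∈ Finset.range (n + 1), (2 : ℝ) ^ k / (k + 1) with hTn
    have hn1 : ((n : ℝ) + 1) ≠ 0 := by positivity
    have hn2 : ((n : ℝ) + 2) ≠ 0 := by positivity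
    have hpow : ((2 : ℝ) ^ n) ≠ 0 := by positivity
    have e1 := Finset.sum_range_succ (fun k => (1 : ℝ) / ((n + 1).choose k)) (n + 1)
    have e2 := Finset.sum_range_succ' (fun k => (1 : ℝ) / ((n + 1).choose k)) (n + 1)
    have e3 : ∑ k ∈ Finset.range (n + 1),
        ((1 : ℝ) / ((n + 1).choose k) + 1 / ((n + 1).choose (k + 1)))
        = (n + 2) / (n + 1) * Sn := by
      rw [hSn, Finset.mul_sum]
      refine Finset.sum_congr rfl fun k hk => ?_
      exact pair_aux n k (by simpa using Nat.lt_succ_iff.mp (Finset.mem_range.mp hk))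
    have esplit : ∑ k ∈ Finset.range (n + 1),
        ((1 : ℝ) / ((n + 1).choose k) + 1 / ((n + 1).choose (k + 1)))
        = (∑ k ∈ Finset.range (n + 1), (1 : ℝ) / ((n + 1).choose k))
          + ∑ k ∈ Finset.range (n + 1), (1 : ℝ) / ((n + 1).choose (k + 1)) :=
      Finset.sum_add_distrib
    have hS : ∑ k ∈ Finset.range (n + 2), (1 : ℝ) / ((n + 1).choose k)
        = (n + 2) / (2 * (n + 1)) * Sn + 1 := by
      have f0 : (1 : ℝ) / ((n + 1).choose 0) = 1 := by simp
      have fl : (1 : ℝ) / ((n + 1).choose (n + 1)) = 1 := by simp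
      have two_eq : 2 * (∑ k ∈ Finset.range (n + 2), (1 : ℝ) / ((n + 1).choose k))
          = (n + 2) / (n + 1) * Sn + 2 := by
        rw [two_mul]
        nth_rewrite 1 [e1]
        nth_rewrite 1 [e2]
        rw [← e3, esplit] at *
        rw [f0, fl]
        ring
      have hhalf : ((n : ℝ) + 2) / (2 * (n + 1)) = (n + 2) / (n + 1) / 2 := by
        rw [div_div]; ring_nf
      rw [hhalf]
      linarith
    push_cast
    rw [show ((n : ℕ) + 1 : ℕ) + 1 = n + 2 from rfl] at *
    rw [hS, Finset.sum_range_succ, ih, ← hTn]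
    push_cast
    field_simp
    ring
end

section
/- For every positive integer n, R_n = (1/2) * R_{n-1} + 1/n, where R_n = (1/n) * Σ_{k=0}^{n-1} 1/C(n-1,k) and R_0 = 0. -/
lemma key_s3 (p k : ℕ) (hk : k ≤ p) :
    (1:ℝ)/((p+1).choose k) + 1/((p+1).choose (k+1)) = (p+2)/((p+1) * (p.choose k)) := by
  have hc0 : (0:ℝ) < (p.choose k : ℝ) := by exact_mod_cast Nat.choose_pos hk
  have hc1 : (0:ℝ) < ((p+1).choose k : ℝ) := by
    exact_mod_cast Nat.choose_pos (le_trans hk (Nat.le_succ p))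
  have hc2 : (0:ℝ) < ((p+1).choose (k+1) : ℝ) := by
    exact_mod_cast Nat.choose_pos (Nat.succ_le_succ hk)
  have h1 : ((p+1).choose (k+1) : ℝ) * (k+1) = (p+1) * (p.choose k) := by
    exact_mod_cast congrArg (Nat.cast (R := ℝ)) (Nat.add_one_mul_choose_eq p k).symm
  have h2 : ((p+1).choose k : ℝ) * (p + 1 - k) = (p.choose k) * (p+1) := by
    have := Nat.choose_mul_succ_eq p k
    have hs : ((p + 1 - k : ℕ) : ℝ) = (p:ℝ) + 1 - k := by
      have : k ≤ p + 1 := le_trans hk (Nat.le_succ p)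
      push_cast [Nat.cast_sub this]
      ring
    calc ((p+1).choose k : ℝ) * ((p:ℝ) + 1 - k) = ((p+1).choose k : ℝ) * ((p+1-k : ℕ):ℝ) := by rw [hs]
    _ = (p.choose k) * (p+1) := by exact_mod_cast this.symm
  have hk' : (k:ℝ) ≤ p := by exact_mod_cast hk
  field_simp
  nlinarith [h1, h2, hc0, hc1, hc2]

theorem stmt_3 (n : ℕ) (hn : 0 < n)
    (R : ℕ → ℝ)
    (hR : ∀ m, R m = (1 / m : ℝ) * ∑ k ∈ Finset.range m, (1 : ℝ) / (m - 1).choose k) :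
    R n = (1 / 2) * R (n - 1) + 1 / n := by
  rw [hR, hR]
  match n, hn with
  | 1, _ => norm_num
  | (p+2), _ =>
    simp only [show p+2-1=p+1 from rfl, show p+1-1=p from rfl]
    have hA : ∑ k ∈ Finset.range (p+2), (1:ℝ) / ((p+1).choose k)
        = ∑ k ∈ Finset.range (p+1), (1:ℝ) / ((p+1).choose k) + 1 := by
      rw [Finset.sum_range_succ, Nat.choose_self]
      norm_num
    have hA' : ∑ k ∈ Finset.range (p+2), (1:ℝ) / ((p+1).choose k)
        = 1 + ∑ k ∈ Finset.range (p+1), (1:ℝ) / ((p+1).choose (k+1)) := by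
      rw [Finset.sum_range_succ', Nat.choose_zero_right]
      norm_num [add_comm]
    have hkey : ∑ k ∈ Finset.range (p+1), ((1:ℝ)/((p+1).choose k) + 1/((p+1).choose (k+1)))
        = ((p:ℝ)+2)/((p+1)) * ∑ k ∈ Finset.range (p+1), (1:ℝ)/(p.choose k) := by
      rw [Finset.mul_sum]
      refine Finset.sum_congr rfl fun k hk => ?_
      rw [key_s3 p k (Nat.lt_succ_iff.mp (Finset.mem_range.mp hk))]
      have hc0 : (p.choose k : ℝ) ≠ 0 := by
        exact_mod_cast (Nat.choose_pos (Nat.lt_succ_iff.mp (Finset.mem_range.mp hk))).ne'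
      field_simp
    rw [Finset.sum_add_distrib] at hkey
    have h2A : 2 * ∑ k ∈ Finset.range (p+2), (1:ℝ) / ((p+1).choose k)
        = ((p:ℝ)+2)/((p+1)) * ∑ k ∈ Finset.range (p+1), (1:ℝ)/(p.choose k) + 2 := by
      nlinarith [hA, hA', hkey]
    have hp1 : ((p:ℝ)+1) ≠ 0 := by positivity
    have hp2 : ((p:ℝ)+2) ≠ 0 := by positivity
    push_cast
    field_simp at h2A ⊢
    nlinarith [h2A]
end

section
/- For every natural number l, the Fubini number satisfies r_l = (1/2) Σ_{n≥0} n^l / 2^n, with the infinite series converging. -/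
def stirling2 : ℕ → ℕ → ℕ
  | 0, 0 => 1
  | 0, _ + 1 => 0
  | _ + 1, 0 => 0
  | n + 1, k + 1 => stirling2 n k + (k + 1) * stirling2 n (k + 1)

/-- Fubini number: number of preferential arrangements of an `l`-set. -/
def fubini (l : ℕ) : ℕ := ∑ k ∈ Finset.range (l + 1), stirling2 l k * Nat.factorial k

lemma stirling2_eq_zero_of_lt : ∀ {l k : ℕ}, l < k → stirling2 l k = 0
  | 0, _ + 1, _ => rfl
  | _ + 1, _ + 1, h => by
      rw [stirling2, stirling2_eq_zero_of_lt (by omega), stirling2_eq_zero_of_lt (by omega)]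
      simp

lemma mul_descFactorial (n k : ℕ) :
    n * n.descFactorial k = n.descFactorial (k + 1) + k * n.descFactorial k := by
  rcases le_or_gt k n with h | h
  · rw [Nat.descFactorial_succ, ← Nat.add_mul, Nat.sub_add_cancel h]
  · rw [Nat.descFactorial_eq_zero_iff_lt.2 h, Nat.descFactorial_eq_zero_iff_lt.2 (by omega)]
    simp

lemma pow_eq_sum_stirling (l n : ℕ) :
    n ^ l = ∑ k ∈ Finset.range (l + 1), stirling2 l k * n.descFactorial k := by
  induction l with
  | zero => simp [stirling2]
  | succ l ih =>
      have key : ∑ k ∈ Finset.range (l + 1), (k + 1) * stirling2 l (k + 1) *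
          n.descFactorial (k + 1) =
          ∑ k ∈ Finset.range (l + 1), k * stirling2 l k * n.descFactorial k := by
        have h1 : ∑ k ∈ Finset.range (l + 2), k * stirling2 l k * n.descFactorial k =
            (∑ k ∈ Finset.range (l + 1), (k + 1) * stirling2 l (k + 1) *
              n.descFactorial (k + 1)) + 0 * stirling2 l 0 * n.descFactorial 0 :=
          Finset.sum_range_succ' _ (l + 1)
        have h2 : ∑ k ∈ Finset.range (l + 2), k * stirling2 l k * n.descFactorial k =
            (∑ k ∈ Finset.range (l + 1), k * stirling2 l k * n.descFactorial k) +
              (l + 1) * stirling2 l (l + 1) * n.descFactorial (l + 1) :=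
          Finset.sum_range_succ _ (l + 1)
        rw [stirling2_eq_zero_of_lt (by omega)] at h2
        simp only [Nat.zero_mul, Nat.mul_zero, Nat.add_zero] at h1 h2
        omega
      calc n ^ (l + 1)
          = ∑ k ∈ Finset.range (l + 1), stirling2 l k * (n * n.descFactorial k) := by
            rw [pow_succ, ih, Finset.sum_mul]
            exact Finset.sum_congr rfl fun k _ => by ring
        _ = (∑ k ∈ Finset.range (l + 1), stirling2 l k * n.descFactorial (k + 1)) +
              ∑ k ∈ Finset.range (l + 1), k * stirling2 l k * n.descFactorial k := by
            rw [← Finset.sum_add_distrib]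
            refine Finset.sum_congr rfl fun k _ => ?_
            rw [mul_descFactorial]
            ring
        _ = ∑ k ∈ Finset.range (l + 1),
              (stirling2 l k + (k + 1) * stirling2 l (k + 1)) * n.descFactorial (k + 1) := by
            rw [← key, ← Finset.sum_add_distrib]
            exact Finset.sum_congr rfl fun k _ => by ring
        _ = ∑ k ∈ Finset.range (l + 2), stirling2 (l + 1) k * n.descFactorial k := by
            rw [Finset.sum_range_succ' _ (l + 1)]
            show _ = (∑ k ∈ Finset.range (l + 1),
                stirling2 (l + 1) (k + 1) * n.descFactorial (k + 1)) +
                stirling2 (l + 1) 0 * n.descFactorial 0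
            have h0 : stirling2 (l + 1) 0 = 0 := rfl
            rw [h0, Nat.zero_mul, Nat.add_zero]
            rfl

lemma hasSum_choose_half (k : ℕ) :
    HasSum (fun n : ℕ => (n.choose k : ℝ) * (1 / 2) ^ n) 2 := by
  have hr : ‖(1 / 2 : ℝ)‖ < 1 := by
    rw [Real.norm_eq_abs, abs_of_nonneg (by norm_num)]; norm_num
  have h := (hasSum_choose_mul_geometric_of_norm_lt_one k hr).mul_left ((1 / 2 : ℝ) ^ k)
  have h' : HasSum (fun n : ℕ => ((n + k).choose k : ℝ) * (1 / 2) ^ (n + k)) 2 := by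
    convert h using 2 with n
    · rfl
    · rw [pow_add]; ring
    · rw [show (1 : ℝ) - 1 / 2 = 1 / 2 by norm_num]
      field_simp
      rw [pow_succ]
      ring
  have h2 := (hasSum_nat_add_iff (f := fun n : ℕ => (n.choose k : ℝ) * (1 / 2) ^ n) k).1 h'
  have hz : ∑ i ∈ Finset.range k, (i.choose k : ℝ) * (1 / 2) ^ i = 0 :=
    Finset.sum_eq_zero fun i hi => by
      rw [Nat.choose_eq_zero_of_lt (Finset.mem_range.1 hi)]; simp
  rwa [hz, add_zero] at h2

lemma hasSum_descFactorial_half (k : ℕ) :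
    HasSum (fun n : ℕ => (n.descFactorial k : ℝ) * (1 / 2) ^ n) (2 * k.factorial) := by
  have h := (hasSum_choose_half k).mul_left (k.factorial : ℝ)
  rw [mul_comm] at h
  have e : (fun n : ℕ => (n.descFactorial k : ℝ) * (1 / 2) ^ n) =
      fun n : ℕ => (k.factorial : ℝ) * ((n.choose k : ℝ) * (1 / 2) ^ n) := by
    funext n
    rw [← mul_assoc, ← Nat.cast_mul, ← Nat.descFactorial_eq_factorial_mul_choose]
  rw [e]
  exact h

/-- Gross's formula: `r_l = (1/2) ∑_{n ≥ 0} n^l / 2^n` (with `0^0 = 1`). -/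
theorem stmt_10 (l : ℕ) :
    HasSum (fun n : ℕ => (n : ℝ) ^ l / 2 ^ n) (2 * fubini l) := by
  have h : ∀ k ∈ Finset.range (l + 1), HasSum
      (fun n : ℕ => (stirling2 l k : ℝ) * ((n.descFactorial k : ℝ) * (1 / 2) ^ n))
      ((stirling2 l k : ℝ) * (2 * k.factorial)) :=
    fun k _ => (hasSum_descFactorial_half k).mul_left _
  have H := hasSum_sum h
  have e1 : (fun n : ℕ => ∑ k ∈ Finset.range (l + 1),
      (stirling2 l k : ℝ) * ((n.descFactorial k : ℝ) * (1 / 2) ^ n)) =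
      fun n : ℕ => (n : ℝ) ^ l / 2 ^ n := by
    funext n
    have := pow_eq_sum_stirling l n
    have c : ((n : ℝ)) ^ l = ∑ k ∈ Finset.range (l + 1),
        (stirling2 l k : ℝ) * (n.descFactorial k : ℝ) := by
      exact_mod_cast congrArg (Nat.cast : ℕ → ℝ) this
    rw [c, Finset.sum_div]
    refine Finset.sum_congr rfl fun k _ => ?_
    rw [one_div, inv_pow]
    ring
  have e2 : ∑ k ∈ Finset.range (l + 1), (stirling2 l k : ℝ) * (2 * k.factorial) =
      2 * fubini l := by
    rw [fubini]
    push_cast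
    rw [Finset.mul_sum]
    exact Finset.sum_congr rfl fun k _ => by ring
  rw [e1, e2] at H
  exact H
end

section
/- For every natural number l, s_l = Σ_{k=0}^{l} C(l,k) r_k r_{l−k}, where r_m = Σ_{j=0}^{m} S(m,j)·j! and s_l = Σ_{k=0}^{l} S(l,k)·(k+1)!. -/
/-- Barred preferential arrangement number. -/
def barredFubini (l : ℕ) : ℕ :=
  ∑ k ∈ Finset.range (l + 1), stirling2 l k * Nat.factorial (k + 1)

lemma stirling2_zero (n : ℕ) : stirling2 (n + 1) 0 = 0 := rfl

lemma stirling2_eq_zero : ∀ n k, n < k → stirling2 n k = 0 := by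
  intro n
  induction n with
  | zero => intro k hk; match k, hk with | k + 1, _ => rfl
  | succ n ih =>
    intro k hk
    match k, hk with
    | k + 1, hk =>
      show stirling2 n k + (k + 1) * stirling2 n (k + 1) = 0
      rw [ih k (by omega), ih (k+1) (by omega)]; simp

lemma L1 : ∀ n k, stirling2 (n + 1) (k + 1) =
    ∑ j ∈ Finset.range (n + 1), n.choose j * stirling2 j k := by
  intro n
  induction n with
  | zero => intro k; simp [stirling2]
  | succ n ih =>
    intro k
    have step : stirling2 (n + 2) (k + 1)
        = stirling2 (n + 1) k + (k + 1) * stirling2 (n + 1) (k + 1) := rfl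
    -- RHS manipulation
    have rhs : ∑ j ∈ Finset.range (n + 2), (n+1).choose j * stirling2 j k
        = stirling2 (n+1) (k+1) + ∑ i ∈ Finset.range (n+1), n.choose i * stirling2 (i+1) k := by
      have split : ∀ j ∈ Finset.range (n+2), (n+1).choose j * stirling2 j k
          = n.choose j * stirling2 j k + (if j = 0 then 0 else n.choose (j-1) * stirling2 j k) := by
        intro j hj
        match j with
        | 0 => simp
        | j + 1 =>
          simp only [Nat.choose_succ_succ, Nat.add_mul, Nat.add_sub_cancel, if_neg (Nat.succ_ne_zero j)]
          rw [Nat.succ_eq_add_one]; ring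
      rw [Finset.sum_congr rfl split, Finset.sum_add_distrib]
      congr 1
      · rw [Finset.sum_range_succ, Nat.choose_succ_self, ih k]
        simp
      · rw [Finset.sum_range_succ']
        simp
    rw [step, rhs]
    match k with
    | 0 =>
      have h0 : ∀ i ∈ Finset.range (n+1), n.choose i * stirling2 (i+1) 0 = 0 := by
        intro i _; rw [stirling2_zero]; ring
      rw [Finset.sum_congr rfl h0, stirling2_zero]
      simp
    | k + 1 =>
      have hs : ∀ i ∈ Finset.range (n+1), n.choose i * stirling2 (i+1) (k+1)
          = n.choose i * stirling2 i k + (k+1) * (n.choose i * stirling2 i (k+1)) := by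
        intro i _
        show n.choose i * (stirling2 i k + (k + 1) * stirling2 i (k + 1)) = _
        ring
      rw [Finset.sum_congr rfl hs, Finset.sum_add_distrib, ← Finset.mul_sum, ← ih k, ← ih (k+1)]
      ring

lemma fubini_succ (n : ℕ) : fubini (n + 1)
    = ∑ k ∈ Finset.range (n + 1), stirling2 (n + 1) (k + 1) * Nat.factorial (k + 1) := by
  rw [fubini, Finset.sum_range_succ']
  simp [stirling2_zero]

lemma lemA (n : ℕ) : fubini (n + 1)
    = ∑ j ∈ Finset.range (n + 1), n.choose j * barredFubini j := by
  rw [fubini_succ]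
  have h : ∀ k ∈ Finset.range (n + 1), stirling2 (n + 1) (k + 1) * Nat.factorial (k + 1)
      = ∑ j ∈ Finset.range (n + 1), n.choose j * (stirling2 j k * Nat.factorial (k + 1)) := by
    intro k _
    rw [L1, Finset.sum_mul]
    exact Finset.sum_congr rfl fun j _ => by ring
  rw [Finset.sum_congr rfl h, Finset.sum_comm]
  refine Finset.sum_congr rfl fun j hj => ?_
  rw [← Finset.mul_sum]
  congr 1
  rw [barredFubini]
  symm
  apply Finset.sum_subset
  · intro x hx
    simp only [Finset.mem_range] at *
    omega
  · intro x _ hx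
    simp only [Finset.mem_range, not_lt] at hx
    rw [stirling2_eq_zero j x (by omega)]
    ring

lemma lemB (n : ℕ) : fubini (n + 1) + fubini n = 2 * barredFubini n := by
  have h1 : fubini (n + 1) = barredFubini n
      + ∑ k ∈ Finset.range (n + 1), (k + 1) * stirling2 n (k + 1) * Nat.factorial (k + 1) := by
    rw [fubini_succ, barredFubini, ← Finset.sum_add_distrib]
    refine Finset.sum_congr rfl fun k _ => ?_
    show (stirling2 n k + (k + 1) * stirling2 n (k + 1)) * _ = _
    ring
  have h2 : ∑ k ∈ Finset.range (n + 1), (k + 1) * stirling2 n (k + 1) * Nat.factorial (k + 1)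
      = ∑ k ∈ Finset.range (n + 1), k * stirling2 n k * Nat.factorial k := by
    have e1 := Finset.sum_range_succ' (fun k => k * stirling2 n k * Nat.factorial k) (n + 1)
    have e2 := Finset.sum_range_succ (fun k => k * stirling2 n k * Nat.factorial k) (n + 1)
    rw [stirling2_eq_zero n (n + 1) (by omega)] at e2
    simp only [Nat.zero_mul, Nat.mul_zero, Nat.add_zero, Nat.mul_one, Nat.zero_add] at e1 e2
    omega
  rw [h1, h2, fubini, Nat.two_mul, barredFubini]
  have h3 : ∀ k ∈ Finset.range (n + 1),
      k * stirling2 n k * Nat.factorial k + stirling2 n k * Nat.factorial k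
      = stirling2 n k * Nat.factorial (k + 1) := by
    intro k _
    rw [Nat.factorial_succ]
    ring
  rw [Nat.add_assoc, ← Finset.sum_add_distrib, Finset.sum_congr rfl h3]

lemma lemC (n : ℕ) : fubini (n + 1) = ∑ j ∈ Finset.range (n + 1), (n + 1).choose j * fubini j := by
  have key : ∑ j ∈ Finset.range (n + 1), n.choose j * (fubini (j + 1) + fubini j)
      = 2 * fubini (n + 1) := by
    have : ∀ j ∈ Finset.range (n + 1), n.choose j * (fubini (j + 1) + fubini j)
        = 2 * (n.choose j * barredFubini j) := by
      intro j _; rw [lemB j]; ring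
    rw [Finset.sum_congr rfl this, ← Finset.mul_sum, ← lemA]
  have e1 : ∑ j ∈ Finset.range (n + 1), n.choose j * (fubini (j + 1) + fubini j)
      = (∑ i ∈ Finset.range n, n.choose i * fubini (i + 1) + fubini (n + 1))
        + (fubini 0 + ∑ i ∈ Finset.range n, n.choose (i + 1) * fubini (i + 1)) := by
    have : ∀ j ∈ Finset.range (n + 1), n.choose j * (fubini (j + 1) + fubini j)
        = n.choose j * fubini (j + 1) + n.choose j * fubini j := fun j _ => by ring
    rw [Finset.sum_congr rfl this, Finset.sum_add_distrib]
    congr 1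
    · rw [Finset.sum_range_succ, Nat.choose_self]; simp
    · rw [Finset.sum_range_succ']; simp [Nat.add_comm]
  have e2 : ∑ j ∈ Finset.range (n + 1), (n + 1).choose j * fubini j
      = fubini 0 + (∑ i ∈ Finset.range n, n.choose i * fubini (i + 1)
        + ∑ i ∈ Finset.range n, n.choose (i + 1) * fubini (i + 1)) := by
    rw [Finset.sum_range_succ']
    simp only [Nat.choose_zero_right, Nat.one_mul]
    rw [← Finset.sum_add_distrib]
    have : ∀ i ∈ Finset.range n, (n + 1).choose (i + 1) * fubini (i + 1)
        = n.choose i * fubini (i + 1) + n.choose (i + 1) * fubini (i + 1) := by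
      intro i _; rw [Nat.choose_succ_succ]; ring
    rw [Finset.sum_congr rfl this]
    ring
  omega

lemma fubini_zero : fubini 0 = 1 := rfl

lemma lemT (l : ℕ) : ∑ k ∈ Finset.range (l + 1), l.choose k * fubini k * fubini (l - k)
    = fubini l + ∑ j ∈ Finset.range l, l.choose j *
        (∑ k ∈ Finset.range (j + 1), j.choose k * fubini k * fubini (j - k)) := by
  rw [Finset.sum_range_succ, Nat.choose_self, Nat.sub_self, fubini_zero]
  simp only [Nat.one_mul, Nat.mul_one]
  rw [Nat.add_comm]
  congr 1
  have lhs : ∀ k ∈ Finset.range l, l.choose k * fubini k * fubini (l - k)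
      = ∑ i ∈ Finset.range (l - k), l.choose k * fubini k * ((l - k).choose i * fubini i) := by
    intro k hk
    simp only [Finset.mem_range] at hk
    rw [← Finset.mul_sum]
    congr 1
    have h : l - k = (l - k - 1) + 1 := by omega
    rw [h, ← lemC, ← h]
  have rhs : ∀ j ∈ Finset.range l, l.choose j *
      (∑ k ∈ Finset.range (j + 1), j.choose k * fubini k * fubini (j - k))
      = ∑ k ∈ Finset.range (j + 1), l.choose j * (j.choose k * fubini k * fubini (j - k)) := by
    intro j _; rw [Finset.mul_sum]
  rw [Finset.sum_congr rfl lhs, Finset.sum_congr rfl rhs, Finset.sum_sigma', Finset.sum_sigma']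
  apply Finset.sum_nbij' (fun p => (⟨p.1 + p.2, p.1⟩ : Σ _ : ℕ, ℕ))
      (fun p => (⟨p.2, p.1 - p.2⟩ : Σ _ : ℕ, ℕ))
  · rintro ⟨k, i⟩ hp
    simp only [Finset.mem_sigma, Finset.mem_range] at *
    omega
  · rintro ⟨j, k⟩ hp
    simp only [Finset.mem_sigma, Finset.mem_range] at *
    omega
  · rintro ⟨k, i⟩ hp
    simp only [Finset.mem_sigma, Finset.mem_range] at hp
    simp
  · rintro ⟨j, k⟩ hp
    simp only [Finset.mem_sigma, Finset.mem_range] at hp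
    have h : k + (j - k) = j := by omega
    simp [h]
  · rintro ⟨k, i⟩ hp
    simp only [Finset.mem_sigma, Finset.mem_range] at hp
    simp only [Nat.add_sub_cancel_left]
    have h1 : k + i ≤ l := by omega
    have h2 : k ≤ k + i := by omega
    have hc := Nat.choose_mul (n := l) h2
    rw [Nat.add_sub_cancel_left] at hc
    rw [show l.choose (k + i) * ((k + i).choose k * fubini k * fubini i)
        = l.choose (k + i) * (k + i).choose k * (fubini k * fubini i) by ring, hc]
    ring

theorem stmt_11 (l : ℕ) :
    barredFubini l = ∑ k ∈ Finset.range (l + 1), l.choose k * fubini k * fubini (l - k) := by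
  induction l using Nat.strong_induction_on with
  | _ l ih =>
    have hA := lemA l
    have hB := lemB l
    rw [Finset.sum_range_succ, Nat.choose_self, Nat.one_mul] at hA
    have hsum : ∑ j ∈ Finset.range l, l.choose j * barredFubini j
        = ∑ j ∈ Finset.range l, l.choose j *
            (∑ k ∈ Finset.range (j + 1), j.choose k * fubini k * fubini (j - k)) := by
      refine Finset.sum_congr rfl fun j hj => ?_
      rw [ih j (Finset.mem_range.mp hj)]
    rw [hsum] at hA
    have hT := lemT l
    omega
end

section
/- The exponential generating function of the barred preferential arrangement numbers satisfies Σ_{l≥0} s_l z^l/l! = 1/(2 − e^z)^2 for |z| < log 2. -/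
open Finset

lemma stirling2_eq_zero_s12 {l k : ℕ} (h : l < k) : stirling2 l k = 0 := by
  induction l generalizing k with
  | zero => cases k with
    | zero => omega
    | succ k => rfl
  | succ l ih => cases k with
    | zero => omega
    | succ k =>
      have h1 : stirling2 l k = 0 := ih (by omega)
      have h2 : stirling2 l (k + 1) = 0 := ih (by omega)
      simp [stirling2, h1, h2]

lemma stirling_formula (l k : ℕ) :
    ((Nat.factorial k : ℤ) * stirling2 l k) =
      ∑ j ∈ range (k + 1), (-1) ^ (k + j) * (Nat.choose k j : ℤ) * (j : ℤ) ^ l := by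
  induction l generalizing k with
  | zero =>
    cases k with
    | zero => simp [stirling2]
    | succ k =>
      have h0 : (stirling2 0 (k + 1) : ℤ) = 0 := by norm_num [stirling2]
      rw [h0, mul_zero]
      have : ∀ j ∈ range (k + 2),
          (-1 : ℤ) ^ (k + 1 + j) * (Nat.choose (k + 1) j : ℤ) * (j : ℤ) ^ 0
            = (-1) ^ (k + 1) * ((-1) ^ j * (Nat.choose (k + 1) j : ℤ)) := by
        intro j hj
        rw [pow_add]
        ring
      rw [Finset.sum_congr rfl this, ← Finset.mul_sum,
        Int.alternating_sum_range_choose_of_ne (Nat.succ_ne_zero k), mul_zero]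
  | succ l ih =>
    cases k with
    | zero =>
      simp only [Nat.factorial_zero, Nat.cast_one, one_mul, range_one, Finset.sum_singleton]
      norm_num [stirling2]
    | succ k =>
      have hrec : (stirling2 (l + 1) (k + 1) : ℤ)
          = stirling2 l k + (k + 1) * stirling2 l (k + 1) := by
        norm_num [stirling2]
      have hfac : (Nat.factorial (k + 1) : ℤ) = (k + 1) * Nat.factorial k := by
        push_cast [Nat.factorial_succ]; ring
      -- abbreviations
      set A : ℤ := ∑ j ∈ range (k + 1), (-1) ^ (k + j) * (Nat.choose k j : ℤ) * (j : ℤ) ^ l with hA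
      set B : ℤ := ∑ j ∈ range (k + 2), (-1) ^ (k + 1 + j) * (Nat.choose (k + 1) j : ℤ) * (j : ℤ) ^ l with hB
      set C : ℤ := ∑ i ∈ range (k + 1), (-1) ^ (k + i) * (Nat.choose k i : ℤ) * ((i : ℤ) + 1) ^ l with hC
      have hLHS : (Nat.factorial (k + 1) : ℤ) * stirling2 (l + 1) (k + 1)
          = (k + 1) * (A + B) := by
        rw [hrec, hA, hB, ← ih k, ← ih (k + 1)]
        push_cast [Nat.factorial_succ]
        ring
      -- RHS equals (k+1) * C
      have hRHS : (∑ j ∈ range (k + 2),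
            (-1) ^ (k + 1 + j) * (Nat.choose (k + 1) j : ℤ) * (j : ℤ) ^ (l + 1))
          = (k + 1) * C := by
        rw [Finset.sum_range_succ' _ (k + 1)]
        simp only [Nat.cast_zero, zero_pow (Nat.succ_ne_zero l), mul_zero, add_zero]
        rw [hC, Finset.mul_sum]
        refine Finset.sum_congr rfl fun i hi => ?_
        have hch : ((Nat.choose (k + 1) (i + 1) : ℤ)) * (i + 1)
            = (k + 1) * Nat.choose k i := by
          have := Nat.add_one_mul_choose_eq k i
          have : ((k + 1) * Nat.choose k i : ℤ) = (Nat.choose (k + 1) (i + 1) * (i + 1) : ℕ) := by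
            rw [← this]; push_cast; ring
          rw [this]; push_cast; ring
        have hsgn : (-1 : ℤ) ^ (k + 1 + (i + 1)) = (-1) ^ (k + i) := by
          have : k + 1 + (i + 1) = k + i + 2 := by omega
          rw [this, pow_add]; norm_num
        calc (-1 : ℤ) ^ (k + 1 + (i + 1)) * (Nat.choose (k + 1) (i + 1) : ℤ) * ((i : ℤ) + 1) ^ (l + 1)
            = (-1) ^ (k + i) * ((Nat.choose (k + 1) (i + 1) : ℤ) * ((i : ℤ) + 1)) * ((i : ℤ) + 1) ^ l := by
              rw [hsgn]; push_cast; ring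
          _ = (k + 1) * ((-1) ^ (k + i) * (Nat.choose k i : ℤ) * ((i : ℤ) + 1) ^ l) := by
              push_cast at hch ⊢; rw [hch]; ring
      -- key: A + B = C
      have hkey : A + B = C := by
        have hBsplit : B = (∑ i ∈ range (k + 1),
              (-1) ^ (k + i) * ((Nat.choose k i : ℤ) + Nat.choose k (i + 1)) * ((i : ℤ) + 1) ^ l)
            + (-1) ^ (k + 1) * (0 : ℤ) ^ l := by
          have hterm : ∀ i ∈ range (k + 1),
              (-1 : ℤ) ^ (k + 1 + (i + 1)) * (Nat.choose (k + 1) (i + 1) : ℤ) * ((i : ℕ) + 1 : ℕ) ^ l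
                = (-1) ^ (k + i) * ((Nat.choose k i : ℤ) + Nat.choose k (i + 1)) * ((i : ℤ) + 1) ^ l := by
            intro i hi
            have hsgn : (-1 : ℤ) ^ (k + 1 + (i + 1)) = (-1) ^ (k + i) := by
              have : k + 1 + (i + 1) = k + i + 2 := by omega
              rw [this, pow_add]; norm_num
            rw [hsgn, Nat.choose_succ_succ]
            push_cast; ring
          rw [hB, Finset.sum_range_succ' _ (k + 1), Finset.sum_congr rfl hterm]
          push_cast [Nat.choose_zero_right]
          ring
        have hD : (∑ i ∈ range (k + 1),
              (-1) ^ (k + i) * (Nat.choose k (i + 1) : ℤ) * ((i : ℤ) + 1) ^ l)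
            = -(A - (-1) ^ k * (0 : ℤ) ^ l) := by
          have hAsplit : A = (∑ i ∈ range k,
                (-1) ^ (k + (i + 1)) * (Nat.choose k (i + 1) : ℤ) * ((i : ℤ) + 1) ^ l)
              + (-1) ^ k * (0 : ℤ) ^ l := by
            rw [hA, Finset.sum_range_succ' _ k]
            push_cast [Nat.choose_zero_right]
            ring
          have hDrop : (∑ i ∈ range (k + 1),
                (-1) ^ (k + i) * (Nat.choose k (i + 1) : ℤ) * ((i : ℤ) + 1) ^ l)
              = ∑ i ∈ range k, (-1) ^ (k + i) * (Nat.choose k (i + 1) : ℤ) * ((i : ℤ) + 1) ^ l := by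
            rw [Finset.sum_range_succ, Nat.choose_succ_self]
            simp
          rw [hDrop, hAsplit, add_sub_cancel_right, ← Finset.sum_neg_distrib]
          refine Finset.sum_congr rfl fun i hi => ?_
          rw [show k + (i + 1) = k + i + 1 by omega, pow_succ]
          ring
        rw [hBsplit]
        have : (∑ i ∈ range (k + 1),
              (-1) ^ (k + i) * ((Nat.choose k i : ℤ) + Nat.choose k (i + 1)) * ((i : ℤ) + 1) ^ l)
            = C + ∑ i ∈ range (k + 1), (-1) ^ (k + i) * (Nat.choose k (i + 1) : ℤ) * ((i : ℤ) + 1) ^ l := by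
          rw [hC, ← Finset.sum_add_distrib]
          refine Finset.sum_congr rfl fun i hi => ?_
          ring
        rw [this, hD]
        have h0 : (-1 : ℤ) ^ (k + 1) * (0 : ℤ) ^ l = -((-1) ^ k * (0 : ℤ) ^ l) := by
          rw [pow_succ]; ring
        rw [h0]
        ring
      rw [hLHS, hkey, ← hRHS]

lemma hasSum_exp_div (w : ℂ) :
    HasSum (fun n : ℕ => w ^ n / n.factorial) (Complex.exp w) := by
  rw [Complex.exp_eq_exp_ℂ]
  exact NormedSpace.expSeries_div_hasSum_exp w

lemma hasSum_exp_div_real (r : ℝ) :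
    HasSum (fun n : ℕ => r ^ n / n.factorial) (Real.exp r) := by
  rw [Real.exp_eq_exp_ℝ]
  exact NormedSpace.expSeries_div_hasSum_exp r

lemma hasSum_stirl (w : ℂ) (k : ℕ) :
    HasSum (fun l : ℕ => (stirling2 l k : ℂ) * w ^ l / l.factorial)
      ((Complex.exp w - 1) ^ k / k.factorial) := by
  have hfac : (k.factorial : ℂ) ≠ 0 := Nat.cast_ne_zero.2 k.factorial_ne_zero
  have h1 : HasSum
      (fun l : ℕ => ∑ j ∈ range (k + 1),
        ((-1) ^ (k + j) * (Nat.choose k j : ℂ)) * (((j : ℂ) * w) ^ l / l.factorial))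
      (∑ j ∈ range (k + 1),
        ((-1) ^ (k + j) * (Nat.choose k j : ℂ)) * Complex.exp ((j : ℂ) * w)) :=
    hasSum_sum fun j _ => (hasSum_exp_div ((j : ℂ) * w)).mul_left _
  have hsum_eq : (∑ j ∈ range (k + 1),
        ((-1) ^ (k + j) * (Nat.choose k j : ℂ)) * Complex.exp ((j : ℂ) * w))
      = (Complex.exp w - 1) ^ k := by
    rw [sub_pow]
    refine Finset.sum_congr rfl fun j hj => ?_
    rw [Complex.exp_nat_mul]
    rw [show k + j = j + k from by omega]
    ring
  rw [hsum_eq] at h1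
  have hfun : (fun l : ℕ => ∑ j ∈ range (k + 1),
        ((-1) ^ (k + j) * (Nat.choose k j : ℂ)) * (((j : ℂ) * w) ^ l / l.factorial))
      = fun l : ℕ => ((k.factorial : ℂ) * (stirling2 l k : ℂ)) * w ^ l / l.factorial := by
    funext l
    have h := congrArg (Int.cast : ℤ → ℂ) (stirling_formula l k)
    push_cast at h
    rw [show ((k.factorial : ℂ) * (stirling2 l k : ℂ)) * w ^ l / l.factorial
        = (∑ j ∈ range (k + 1), (-1 : ℂ) ^ (k + j) * (Nat.choose k j : ℂ) * (j : ℂ) ^ l)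
          * (w ^ l / l.factorial) from by rw [← h]; ring]
    rw [Finset.sum_mul]
    refine Finset.sum_congr rfl fun j hj => ?_
    rw [mul_pow]
    ring
  rw [hfun] at h1
  have h2 := h1.div_const (k.factorial : ℂ)
  convert h2 using 1
  · rfl
  funext l
  rw [eq_div_iff hfac]
  ring

lemma hasSum_stirl_real (r : ℝ) (k : ℕ) :
    HasSum (fun l : ℕ => (stirling2 l k : ℝ) * r ^ l / l.factorial)
      ((Real.exp r - 1) ^ k / k.factorial) := by
  have h := hasSum_stirl (r : ℂ) k
  rw [← Complex.hasSum_ofReal]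
  convert h using 2 with l
  · push_cast
    ring
  · rw [← Complex.ofReal_exp]
    push_cast
    ring

lemma hasSum_succ_geom {𝕜 : Type*} [NormedField 𝕜] [CompleteSpace 𝕜] {w : 𝕜} (h : ‖w‖ < 1) :
    HasSum (fun k : ℕ => ((k : 𝕜) + 1) * w ^ k) (1 / (1 - w) ^ 2) := by
  have hne : (1 : 𝕜) - w ≠ 0 := by
    intro hw
    have : w = 1 := (sub_eq_zero.1 hw).symm
    rw [this] at h
    simp at h
  have h1 := hasSum_coe_mul_geometric_of_norm_lt_one h
  have h2 := hasSum_geometric_of_norm_lt_one h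
  have h3 := h1.add h2
  convert h3 using 1
  · funext k
    push_cast
    ring
  · rw [inv_eq_one_div]
    field_simp
    ring

lemma abs_exp_sub_one_le (z : ℂ) :
    ‖Complex.exp z - 1‖ ≤ Real.exp (‖z‖) - 1 := by
  have hC : HasSum (fun n : ℕ => z ^ (n + 1) / (n + 1).factorial) (Complex.exp z - 1) := by
    have h := (hasSum_nat_add_iff' (f := fun n : ℕ => z ^ n / n.factorial) 1).2 (hasSum_exp_div z)
    simpa using h
  have hR : HasSum (fun n : ℕ => (‖z‖) ^ (n + 1) / (n + 1).factorial)
      (Real.exp (‖z‖) - 1) := by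
    have h := (hasSum_nat_add_iff' (f := fun n : ℕ => (‖z‖) ^ n / n.factorial) 1).2
      (hasSum_exp_div_real (‖z‖))
    simpa using h
  have hnorm : ∀ n : ℕ, ‖z ^ (n + 1) / ((n + 1).factorial : ℂ)‖
      = (‖z‖) ^ (n + 1) / (n + 1).factorial := by
    intro n
    rw [norm_div, norm_pow]
    simp [Complex.norm_natCast]
  rw [← hC.tsum_eq, ← hR.tsum_eq]
  refine (norm_tsum_le_tsum_norm ?_).trans_eq (tsum_congr hnorm)
  exact hR.summable.congr fun n => (hnorm n).symm

theorem stmt_12 (z : ℂ) (hz : ‖z‖ < Real.log 2) :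
    HasSum (fun l : ℕ => (barredFubini l : ℂ) * z ^ l / (Nat.factorial l))
      (1 / (2 - Complex.exp z) ^ 2) := by
  set r := ‖z‖ with hr
  have hr0 : 0 ≤ r := norm_nonneg z
  have hx1 : Real.exp r - 1 < 1 := by
    have h2 : Real.exp r < 2 := by
      calc Real.exp r < Real.exp (Real.log 2) := Real.exp_lt_exp.2 hz
        _ = 2 := Real.exp_log (by norm_num)
    linarith
  have hx0 : 0 ≤ Real.exp r - 1 := by linarith [Real.one_le_exp hr0]
  have hwz : ‖Complex.exp z - 1‖ < 1 :=
    lt_of_le_of_lt (abs_exp_sub_one_le z) hx1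
  set g : ℕ × ℕ → ℂ :=
    fun p => ((Nat.factorial (p.1 + 1) : ℂ) * stirling2 p.2 p.1) * z ^ p.2
      / (Nat.factorial p.2) with hgdef
  have hrow : ∀ k : ℕ, HasSum (fun l => g (k, l))
      (((k : ℂ) + 1) * (Complex.exp z - 1) ^ k) := by
    intro k
    have h := (hasSum_stirl z k).mul_left ((Nat.factorial (k + 1) : ℂ))
    convert h using 1
    · rfl
    · funext l
      simp only [hgdef]
      ring
    · rw [Nat.factorial_succ]
      have hfac : (k.factorial : ℂ) ≠ 0 := Nat.cast_ne_zero.2 k.factorial_ne_zero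
      push_cast
      field_simp
  have hrownorm : ∀ k : ℕ, HasSum (fun l => ‖g (k, l)‖)
      (((k : ℝ) + 1) * (Real.exp r - 1) ^ k) := by
    intro k
    have h := (hasSum_stirl_real r k).mul_left ((Nat.factorial (k + 1) : ℝ))
    convert h using 1
    · rfl
    · funext l
      simp only [hgdef, norm_div, norm_mul, norm_pow, Complex.norm_natCast,
        ← hr]
      ring
    · rw [Nat.factorial_succ]
      have hfac : (k.factorial : ℝ) ≠ 0 := Nat.cast_ne_zero.2 k.factorial_ne_zero
      push_cast
      field_simp
  have hgeomR : HasSum (fun k : ℕ => ((k : ℝ) + 1) * (Real.exp r - 1) ^ k)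
      (1 / (1 - (Real.exp r - 1)) ^ 2) := by
    refine hasSum_succ_geom ?_
    rw [Real.norm_eq_abs, abs_of_nonneg hx0]
    exact hx1
  have hsummable : Summable fun p : ℕ × ℕ => ‖g p‖ := by
    refine (summable_prod_of_nonneg fun p => norm_nonneg _).2
      ⟨fun k => (hrownorm k).summable, ?_⟩
    exact hgeomR.summable.congr fun k => ((hrownorm k).tsum_eq).symm
  obtain ⟨T, hT⟩ := hsummable.of_norm
  have h1 : HasSum (fun k : ℕ => ((k : ℂ) + 1) * (Complex.exp z - 1) ^ k) T :=
    hT.prod_fiberwise hrow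
  have h2 : HasSum (fun k : ℕ => ((k : ℂ) + 1) * (Complex.exp z - 1) ^ k)
      (1 / (2 - Complex.exp z) ^ 2) := by
    have h := hasSum_succ_geom (w := Complex.exp z - 1)
      (by exact hwz)
    rw [show (1 : ℂ) - (Complex.exp z - 1) = 2 - Complex.exp z from by ring] at h
    exact h
  have hTeq : T = 1 / (2 - Complex.exp z) ^ 2 := h1.unique h2
  have hswap : HasSum (fun p : ℕ × ℕ => g (p.2, p.1)) T :=
    ((Equiv.prodComm ℕ ℕ).hasSum_iff).2 hT
  have hcol : ∀ l : ℕ, HasSum (fun k => g (k, l))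
      ((barredFubini l : ℂ) * z ^ l / (Nat.factorial l)) := by
    intro l
    have hz0 : ∀ k ∉ range (l + 1), g (k, l) = 0 := by
      intro k hk
      have hlt : l < k := by simpa using hk
      simp [hgdef, stirling2_eq_zero_s12 hlt]
    have h := hasSum_sum_of_ne_finset_zero (L := SummationFilter.unconditional ℕ) hz0
    convert h using 1
    rw [barredFubini]
    push_cast
    rw [Finset.sum_mul, Finset.sum_div]
    refine Finset.sum_congr rfl fun k hk => ?_
    simp only [hgdef]
    ring
  have hfinal : HasSum (fun l : ℕ => (barredFubini l : ℂ) * z ^ l / (Nat.factorial l)) T :=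
    hswap.prod_fiberwise hcol
  rwa [hTeq] at hfinal
end

section
/- For every natural number n ≥ 1, R_{n,n} = R_n, i.e. (2/n) Σ_{j=0}^{n−1} [1/C(n−1,j)] · [2^{−n} Σ_{i=j+1}^{n} C(n,i)] = (1/n) Σ_{j=0}^{n−1} 1/C(n−1,j). -/
/-- Resistance between vertices at Hamming distance `k` in the `n`-cube of unit resistors. -/
noncomputable def cubeRes (n k : ℕ) : ℝ :=
  (2 / n) * ∑ j ∈ Finset.range k,
    (1 / ((n - 1).choose j : ℝ)) * ((1 / 2 ^ n) * ∑ i ∈ Finset.Icc (j + 1) n, (n.choose i : ℝ))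

lemma tail_sum_pair (n j : ℕ) (hj : j < n) :
    (∑ i ∈ Finset.Icc (j + 1) n, (n.choose i : ℝ))
      + (∑ i ∈ Finset.Icc (n - j) n, (n.choose i : ℝ)) = 2 ^ n := by
  have h1 : (∑ i ∈ Finset.Icc (n - j) n, (n.choose i : ℝ))
      = ∑ i ∈ Finset.range (j + 1), (n.choose i : ℝ) := by
    refine Finset.sum_nbij' (fun i => n - i) (fun i => n - i) ?_ ?_ ?_ ?_ ?_
    · intro a ha
      simp only [Finset.mem_Icc] at ha
      simp only [Finset.mem_range]
      omega
    · intro a ha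
      simp only [Finset.mem_range] at ha
      simp only [Finset.mem_Icc]
      omega
    · intro a ha; simp only [Finset.mem_Icc] at ha; show n - (n - a) = a; omega
    · intro a ha; simp only [Finset.mem_range] at ha; show n - (n - a) = a; omega
    · intro a ha
      simp only [Finset.mem_Icc] at ha
      rw [Nat.choose_symm ha.2]
  rw [h1]
  have h2 : Finset.range (n + 1) = Finset.range (j + 1) ∪ Finset.Icc (j + 1) n := by
    ext x
    simp only [Finset.mem_range, Finset.mem_union, Finset.mem_Icc]
    omega
  have h3 : (∑ i ∈ Finset.range (n + 1), (n.choose i : ℝ)) = 2 ^ n := by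
    rw [← Nat.cast_sum, Nat.sum_range_choose]
    push_cast; ring
  rw [h2, Finset.sum_union (by
    rw [Finset.disjoint_left]
    intro a ha hb
    simp only [Finset.mem_range] at ha
    simp only [Finset.mem_Icc] at hb
    omega)] at h3
  linarith

theorem stmt_16 (n : ℕ) (hn : 1 ≤ n) :
    cubeRes n n = (1 / n : ℝ) * ∑ j ∈ Finset.range n, (1 : ℝ) / (n - 1).choose j := by
  unfold cubeRes
  set f : ℕ → ℝ := fun j => (1 / ((n - 1).choose j : ℝ)) with hf
  set S : ℕ → ℝ := fun j => (1 / 2 ^ n) * ∑ i ∈ Finset.Icc (j + 1) n, (n.choose i : ℝ) with hS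
  have hT : (∑ j ∈ Finset.range n, f j * S j)
      = ∑ j ∈ Finset.range n, f j * S (n - 1 - j) := by
    rw [← Finset.sum_range_reflect]
    refine Finset.sum_congr rfl ?_
    intro j hj
    simp only [Finset.mem_range] at hj
    have : (n - 1).choose (n - 1 - j) = (n - 1).choose j := by
      have h := Nat.choose_symm (show n - 1 - j ≤ n - 1 by omega)
      rw [show n - 1 - (n - 1 - j) = j by omega] at h
      exact h.symm
    simp only [hf, this]
  have hsum : (∑ j ∈ Finset.range n, f j * S j) + (∑ j ∈ Finset.range n, f j * S j)
      = ∑ j ∈ Finset.range n, f j := by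
    nth_rewrite 2 [hT]
    rw [← Finset.sum_add_distrib]
    refine Finset.sum_congr rfl ?_
    intro j hj
    simp only [Finset.mem_range] at hj
    have hIcc : n - 1 - j + 1 = n - j := by omega
    have key := tail_sum_pair n j hj
    have h2n : (2 : ℝ) ^ n ≠ 0 := by positivity
    simp only [hS, hIcc]
    field_simp
    linear_combination (f j) * key
  show (2 / (n:ℝ)) * (∑ j ∈ Finset.range n, f j * S j)
      = 1 / (n:ℝ) * ∑ j ∈ Finset.range n, f j
  rw [← hsum]; ring
end

section
/- For 1 ≤ k ≤ n, R_{n,k} − R_{n,k−1} = (1/(n·2^{n−1})) · (1/C(n−1,k−1)) · Σ_{i=k}^{n} C(n,i) > 0; in particular k ↦ R_{n,k} is strictly increasing on 0 ≤ k ≤ n. -/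
theorem stmt_17 (n k : ℕ) (hk : 1 ≤ k) (hkn : k ≤ n) :
    cubeRes n k - cubeRes n (k - 1) =
      (1 / (n * 2 ^ (n - 1) : ℝ)) * (1 / ((n - 1).choose (k - 1) : ℝ)) *
        ∑ i ∈ Finset.Icc k n, (n.choose i : ℝ) ∧
    cubeRes n (k - 1) < cubeRes n k := by
  obtain ⟨m, rfl⟩ : ∃ m, k = m + 1 := ⟨k - 1, (Nat.succ_pred_eq_of_pos hk).symm⟩
  have hn : 1 ≤ n := le_trans hk hkn
  have hm : m ≤ n - 1 := Nat.le_sub_one_of_lt hkn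
  have hchoose : 0 < (n - 1).choose m := Nat.choose_pos hm
  have hnR : (n : ℝ) ≠ 0 := by positivity
  have hcR : ((n - 1).choose m : ℝ) ≠ 0 := by exact_mod_cast hchoose.ne'
  have hpow : (2 : ℝ) ^ n = 2 * 2 ^ (n - 1) := by
    rw [← pow_succ']
    congr 1
    omega
  have key : cubeRes n (m + 1) - cubeRes n (m + 1 - 1) =
      (1 / (n * 2 ^ (n - 1) : ℝ)) * (1 / ((n - 1).choose (m + 1 - 1) : ℝ)) *
        ∑ i ∈ Finset.Icc (m + 1) n, (n.choose i : ℝ) := by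
    simp only [Nat.add_sub_cancel, cubeRes, Finset.sum_range_succ]
    rw [hpow]
    ring
  refine ⟨key, ?_⟩
  have hsum : 0 < ∑ i ∈ Finset.Icc (m + 1) n, (n.choose i : ℝ) := by
    apply Finset.sum_pos
    · intro i hi
      simp only [Finset.mem_Icc] at hi
      exact_mod_cast Nat.choose_pos hi.2
    · exact ⟨n, Finset.mem_Icc.mpr ⟨hkn, le_refl n⟩⟩
  have : 0 < cubeRes n (m + 1) - cubeRes n (m + 1 - 1) := by
    rw [key]
    simp only [Nat.add_sub_cancel]
    have h1 : (0 : ℝ) < n := by exact_mod_cast hn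
    have h2 : (0 : ℝ) < ((n - 1).choose m : ℝ) := by exact_mod_cast hchoose
    positivity
  linarith
end

section
/- For all natural numbers n and j with 0 ≤ j < n/2 − 1, ((n − 2j − 2)/(j + 1)) · Σ_{i=0}^{j} C(n,i) < C(n, j+1). -/
lemma aux_geom (n j : ℕ) (hn : 2 * j + 1 ≤ n) :
    ((n : ℝ) - 2 * j - 1) * ∑ i ∈ Finset.range (j + 1), (n.choose i : ℝ) ≤
      ((n : ℝ) - j) * (n.choose j : ℝ) := by
  induction j with
  | zero => simp
  | succ j ih =>
    have hn' : 2 * j + 1 ≤ n := by omega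
    have ih' := ih hn'
    have hjn : j ≤ n := by omega
    have key : ((n.choose (j+1) : ℝ)) * (j + 1) = (n.choose j : ℝ) * ((n : ℝ) - j) := by
      have := Nat.choose_succ_right_eq n j
      have h2 := congrArg (fun m : ℕ => (m : ℝ)) this
      push_cast [Nat.cast_sub hjn] at h2
      linarith
    rw [Finset.sum_range_succ]
    have hS : (0:ℝ) ≤ ∑ i ∈ Finset.range (j + 1), (n.choose i : ℝ) := by
      positivity
    have hc : (0:ℝ) ≤ (n.choose (j+1) : ℝ) := by positivity
    have hnr : (2 * j + 3 : ℝ) ≤ n := by exact_mod_cast hn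
    -- From ih' and key: (n-2j-1) S ≤ (j+1) c1
    have hA : ((n : ℝ) - 2 * j - 1) * ∑ i ∈ Finset.range (j + 1), (n.choose i : ℝ) ≤
        ((j:ℝ) + 1) * (n.choose (j+1) : ℝ) := by nlinarith
    push_cast
    nlinarith [mul_le_mul_of_nonneg_left hA (by linarith : (0:ℝ) ≤ (n:ℝ) - 2*j - 3),
      mul_nonneg (mul_nonneg (by linarith : (0:ℝ) ≤ (n:ℝ) - 2*j - 1) hS) hc]

theorem stmt_18 (n j : ℕ) (h : (j : ℝ) < n / 2 - 1) :
    ((n : ℝ) - 2 * j - 2) / (j + 1) * ∑ i ∈ Finset.range (j + 1), (n.choose i : ℝ) <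
      (n.choose (j + 1) : ℝ) := by
  have hn : 2 * j + 3 ≤ n := by
    have : (2 * j + 2 : ℝ) < n := by linarith
    exact_mod_cast this
  have hgeom := aux_geom n j (by omega)
  have hjn : j ≤ n := by omega
  have key : ((n.choose (j+1) : ℝ)) * (j + 1) = (n.choose j : ℝ) * ((n : ℝ) - j) := by
    have := Nat.choose_succ_right_eq n j
    have h2 := congrArg (fun m : ℕ => (m : ℝ)) this
    push_cast [Nat.cast_sub hjn] at h2
    linarith
  have hS : (0:ℝ) < ∑ i ∈ Finset.range (j + 1), (n.choose i : ℝ) := by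
    apply Finset.sum_pos
    · intro i hi
      have : i ≤ n := by
        have := Finset.mem_range.mp hi; omega
      exact_mod_cast Nat.choose_pos this
    · exact Finset.nonempty_range_iff.mpr (by omega)
  have hc : (0:ℝ) < (n.choose (j+1) : ℝ) := by
    exact_mod_cast Nat.choose_pos (by omega : j + 1 ≤ n)
  have hnr : (2 * j + 3 : ℝ) ≤ n := by exact_mod_cast hn
  have hj1 : (0:ℝ) < (j:ℝ) + 1 := by positivity
  rw [div_mul_eq_mul_div, div_lt_iff₀ hj1]
  -- (n - 2j - 2) * S < c1 * (j+1); from hgeom: (n-2j-1) S ≤ (n-j) c0 = (j+1) c1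
  have hA : ((n : ℝ) - 2 * j - 1) * ∑ i ∈ Finset.range (j + 1), (n.choose i : ℝ) ≤
      ((j:ℝ) + 1) * (n.choose (j+1) : ℝ) := by nlinarith
  nlinarith
end

section
/- For all natural numbers n and k with 2 ≤ k ≤ n, R_{n,k} − 2 R_{n,k−1} + R_{n,k−2} < 0; i.e. k ↦ R_{n,k} is strictly concave. -/
lemma key_choose (n j i : ℕ) (h1 : j + 1 ≤ i) (h2 : i ≤ n - 1) :
    (n - 1).choose j * n.choose (i + 1) ≤ (n - 1).choose (j + 1) * n.choose i := by
  have hpos : 0 < (j + 1) * (i + 1) := by positivity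
  refine Nat.le_of_mul_le_mul_right ?_ hpos
  have e1 : n.choose (i + 1) * (i + 1) = n.choose i * (n - i) := Nat.choose_succ_right_eq n i
  have e2 : (n - 1).choose (j + 1) * (j + 1) = (n - 1).choose j * (n - 1 - j) :=
    Nat.choose_succ_right_eq (n - 1) j
  calc (n - 1).choose j * n.choose (i + 1) * ((j + 1) * (i + 1))
      = (n - 1).choose j * (n.choose (i + 1) * (i + 1)) * (j + 1) := by ring
    _ = (n - 1).choose j * (n.choose i * (n - i)) * (j + 1) := by rw [e1]
    _ = ((n - 1).choose j * n.choose i) * ((n - i) * (j + 1)) := by ring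
    _ ≤ ((n - 1).choose j * n.choose i) * ((n - 1 - j) * (i + 1)) :=
        Nat.mul_le_mul_left _ (Nat.mul_le_mul (by omega) (by omega))
    _ = ((n - 1).choose j * (n - 1 - j)) * n.choose i * (i + 1) := by ring
    _ = ((n - 1).choose (j + 1) * (j + 1)) * n.choose i * (i + 1) := by rw [e2]
    _ = (n - 1).choose (j + 1) * n.choose i * ((j + 1) * (i + 1)) := by ring

lemma sum_ineq (n j : ℕ) (h : j + 2 ≤ n) :
    (n - 1).choose j * ∑ i ∈ Finset.Icc (j + 2) n, n.choose i
      < (n - 1).choose (j + 1) * ∑ i ∈ Finset.Icc (j + 1) n, n.choose i := by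
  have hmap : Finset.Icc (j + 2) n
      = Finset.map (addRightEmbedding 1) (Finset.Icc (j + 1) (n - 1)) := by
    rw [Finset.map_add_right_Icc]; congr 1 <;> omega
  have hcpos : 0 < (n - 1).choose (j + 1) := Nat.choose_pos (by omega)
  have htop : ∑ i ∈ Finset.Icc (j + 1) n, n.choose i
      = (∑ i ∈ Finset.Icc (j + 1) (n - 1), n.choose i) + n.choose n := by
    have := Finset.sum_Icc_succ_top (show j + 1 ≤ (n - 1) + 1 by omega) (fun i => n.choose i)
    rw [show (n - 1) + 1 = n by omega] at this
    rw [this]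
  calc (n - 1).choose j * ∑ i ∈ Finset.Icc (j + 2) n, n.choose i
      = ∑ i ∈ Finset.Icc (j + 1) (n - 1), (n - 1).choose j * n.choose (i + 1) := by
        rw [hmap, Finset.sum_map, Finset.mul_sum]; rfl
    _ ≤ ∑ i ∈ Finset.Icc (j + 1) (n - 1), (n - 1).choose (j + 1) * n.choose i := by
        refine Finset.sum_le_sum fun i hi => ?_
        obtain ⟨h1, h2⟩ := Finset.mem_Icc.mp hi
        exact key_choose n j i h1 h2
    _ = (n - 1).choose (j + 1) * ∑ i ∈ Finset.Icc (j + 1) (n - 1), n.choose i :=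
        (Finset.mul_sum _ _ _).symm
    _ < (n - 1).choose (j + 1) * ∑ i ∈ Finset.Icc (j + 1) n, n.choose i := by
        rw [htop, Nat.choose_self]
        exact mul_lt_mul_of_pos_left (by omega) hcpos

theorem stmt_19 (n k : ℕ) (hk : 2 ≤ k) (hkn : k ≤ n) :
    cubeRes n k - 2 * cubeRes n (k - 1) + cubeRes n (k - 2) < 0 := by
  obtain ⟨j, rfl⟩ : ∃ j, k = j + 2 := ⟨k - 2, by omega⟩
  have h1 : j + 2 - 1 = j + 1 := by omega
  have h2 : j + 2 - 2 = j := by omega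
  rw [h1, h2]
  set f : ℕ → ℝ := fun j =>
    (1 / ((n - 1).choose j : ℝ)) * ((1 / 2 ^ n) * ∑ i ∈ Finset.Icc (j + 1) n, (n.choose i : ℝ))
    with hf
  have hdiff : cubeRes n (j + 2) - 2 * cubeRes n (j + 1) + cubeRes n j
      = (2 / n) * (f (j + 1) - f j) := by
    simp only [cubeRes, Finset.sum_range_succ, ← hf]
    ring
  rw [hdiff]
  have hnpos : (0 : ℝ) < n := by exact_mod_cast (show 0 < n by omega)
  have hc0 : (0 : ℝ) < ((n - 1).choose j : ℝ) := by
    exact_mod_cast Nat.choose_pos (show j ≤ n - 1 by omega)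
  have hc1 : (0 : ℝ) < ((n - 1).choose (j + 1) : ℝ) := by
    exact_mod_cast Nat.choose_pos (show j + 1 ≤ n - 1 by omega)
  have h2n : (0 : ℝ) < (2 : ℝ) ^ n := by positivity
  have hkey : ((n - 1).choose j : ℝ) * ∑ i ∈ Finset.Icc (j + 2) n, (n.choose i : ℝ)
      < ((n - 1).choose (j + 1) : ℝ) * ∑ i ∈ Finset.Icc (j + 1) n, (n.choose i : ℝ) := by
    exact_mod_cast sum_ineq n j (by omega)
  have hflt : f (j + 1) < f j := by
    simp only [hf]
    rw [show j + 1 + 1 = j + 2 from rfl]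
    set S0 := ∑ i ∈ Finset.Icc (j + 1) n, (n.choose i : ℝ) with hS0
    set S1 := ∑ i ∈ Finset.Icc (j + 2) n, (n.choose i : ℝ) with hS1
    set C0 := ((n - 1).choose j : ℝ) with hC0
    set C1 := ((n - 1).choose (j + 1) : ℝ) with hC1
    rw [show (1 : ℝ) / C1 * (1 / 2 ^ n * S1) = S1 / (2 ^ n * C1) by ring,
      show (1 : ℝ) / C0 * (1 / 2 ^ n * S0) = S0 / (2 ^ n * C0) by ring,
      div_lt_div_iff₀ (by positivity) (by positivity)]
    calc S1 * (2 ^ n * C0) = 2 ^ n * (C0 * S1) := by ring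
      _ < 2 ^ n * (C1 * S0) := mul_lt_mul_of_pos_left hkey h2n
      _ = S0 * (2 ^ n * C1) := by ring
  have : f (j + 1) - f j < 0 := by linarith
  have h2npos : (0 : ℝ) < 2 / n := by positivity
  exact mul_neg_of_pos_of_neg h2npos this
end
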